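/- Let α be a smooth 1-form on ℝ^N, Γ : [a,b] × (−ε, ε) → ℝ^N a smooth variation with γ_s(t) = Γ(t,s), γ = γ₀, δγ(t) = ∂Γ/∂s(t,0). Assume γ is an integral curve of the characteristic line bundle of dα, i.e., dα(γ(t))(γ̇(t), w) = 0 for all t ∈ [a,b] and w ∈ ℝ^N, and that the endpoint variations are horizontal: α(γ(a))(δγ(a)) = 0 and α(γ(b))(δγ(b)) = 0. Then γ is a critical point of the action: d/ds |_{s=0} ∫_a^b α(γ_s(t))(γ̇_s(t)) dt = 0. -/

import Mathlib

noncomputable section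
open scoped ContDiff

/-- The Lie derivative of a 1-form `α` on `ℝ^N` along a vector field `ζ`:
`(L_ζ α)(x)(v) = (Dα(x)(ζ(x)))(v) + α(x)(Dζ(x)(v))`. -/
def lieDerivV {N : ℕ} (ζ : (Fin N → ℝ) → (Fin N → ℝ))
    (α : (Fin N → ℝ) → ((Fin N → ℝ) →L[ℝ] ℝ)) (x : Fin N → ℝ) :
    (Fin N → ℝ) →L[ℝ] ℝ :=
  fderiv ℝ α x (ζ x) + (α x).comp (fderiv ℝ ζ x)

/-- The exterior derivative of a 1-form on `ℝ^N`:
`dα(x)(u,v) = (Dα(x)u)(v) − (Dα(x)v)(u)`. -/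
def extDerivV {N : ℕ} (α : (Fin N → ℝ) → ((Fin N → ℝ) →L[ℝ] ℝ)) (x u v : Fin N → ℝ) : ℝ :=
  fderiv ℝ α x u v - fderiv ℝ α x v u

/-- Partial derivative in the first variable of a map on `ℝ × ℝ`, as a `HasDerivAt`. -/
private lemma hasDerivAt_comp_fst {E : Type*} [NormedAddCommGroup E] [NormedSpace ℝ E]
    {X : ℝ × ℝ → E} (hX : Differentiable ℝ X) (t s : ℝ) :
    HasDerivAt (fun u => X (u, s)) (fderiv ℝ X (t, s) (1, 0)) t :=
  (hX (t, s)).hasFDerivAt.comp_hasDerivAt t ((hasDerivAt_id t).prodMk (hasDerivAt_const t s))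

/-- Partial derivative in the second variable of a map on `ℝ × ℝ`, as a `HasDerivAt`. -/
private lemma hasDerivAt_comp_snd {E : Type*} [NormedAddCommGroup E] [NormedSpace ℝ E]
    {X : ℝ × ℝ → E} (hX : Differentiable ℝ X) (t s : ℝ) :
    HasDerivAt (fun σ => X (t, σ)) (fderiv ℝ X (t, s) (0, 1)) s :=
  (hX (t, s)).hasFDerivAt.comp_hasDerivAt s ((hasDerivAt_const s t).prodMk (hasDerivAt_id s))

/-- if `γ = Γ(·,0)` is an integral curve of the characteristic line
bundle of `dα` (i.e. `γ̇(t) ∈ ker dα(γ(t))`) and the endpoint variations are horizontal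
(`α(γ(a))(δγ(a)) = 0`, `α(γ(b))(δγ(b)) = 0`), then `γ` is a critical point of the
action `∫_a^b α(γ_s)(γ̇_s) dt`. -/
theorem integral_curve_is_critical_point {N : ℕ} (hN : 1 ≤ N)
    (α : (Fin N → ℝ) → ((Fin N → ℝ) →L[ℝ] ℝ)) (hα : ContDiff ℝ ∞ α)
    (Γ : ℝ × ℝ → (Fin N → ℝ)) (hΓ : ContDiff ℝ ∞ Γ)
    (a b ε : ℝ) (hab : a < b) (hε : 0 < ε)
    (hchar : ∀ t ∈ Set.Icc a b, ∀ w,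
      extDerivV α (Γ (t, 0)) (deriv (fun u => Γ (u, 0)) t) w = 0)
    (hhoriz_a : α (Γ (a, 0)) (deriv (fun s => Γ (a, s)) 0) = 0)
    (hhoriz_b : α (Γ (b, 0)) (deriv (fun s => Γ (b, s)) 0) = 0) :
    HasDerivAt
      (fun s => ∫ t in a..b, α (Γ (t, s)) (deriv (fun u => Γ (u, s)) t))
      0 0 := by
  have hone : (∞ : WithTop ℕ∞) ≠ 0 := by simp
  have hΓd : Differentiable ℝ Γ := hΓ.differentiable hone
  have hαd : Differentiable ℝ α := hα.differentiable hone
  set V : ℝ × ℝ → (Fin N → ℝ) := fun p => fderiv ℝ Γ p (1, 0) with hVdef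
  set W : ℝ × ℝ → (Fin N → ℝ) := fun p => fderiv ℝ Γ p (0, 1) with hWdef
  have hΓ' : ContDiff ℝ ∞ (fderiv ℝ Γ) := hΓ.fderiv_right (by norm_num)
  have hΓ'd : Differentiable ℝ (fderiv ℝ Γ) := hΓ'.differentiable hone
  have hVsm : ContDiff ℝ ∞ V := hΓ'.clm_apply contDiff_const
  have hWsm : ContDiff ℝ ∞ W := hΓ'.clm_apply contDiff_const
  have hVd : Differentiable ℝ V := hVsm.differentiable hone
  have hWd : Differentiable ℝ W := hWsm.differentiable hone
  set F : ℝ × ℝ → ℝ := fun p => α (Γ p) (V p) with hFdef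
  have hFsm : ContDiff ℝ ∞ F := (hα.comp hΓ).clm_apply hVsm
  have hFd : Differentiable ℝ F := hFsm.differentiable hone
  -- the t-derivative of `Γ(·,s)` is `V`
  have keyV : ∀ t s : ℝ, deriv (fun u => Γ (u, s)) t = V (t, s) :=
    fun t s => (hasDerivAt_comp_fst hΓd t s).deriv
  -- the goal function equals `fun s => ∫ t in a..b, F (t, s)`
  have hfun : (fun s => ∫ t in a..b, α (Γ (t, s)) (deriv (fun u => Γ (u, s)) t))
      = fun s => ∫ t in a..b, F (t, s) := by
    funext s
    apply intervalIntegral.integral_congr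
    intro t _
    simp only [keyV t s, hFdef]
  rw [hfun]
  -- symmetry of second derivatives
  have hsymm : ∀ p : ℝ × ℝ, ∀ u v : ℝ × ℝ,
      fderiv ℝ (fderiv ℝ Γ) p u v = fderiv ℝ (fderiv ℝ Γ) p v u := by
    intro p u v
    exact second_derivative_symmetric (fun y => (hΓd y).hasFDerivAt) (hΓ'd p).hasFDerivAt u v
  -- directional derivatives of V and W via the second derivative of Γ
  have hL : ∀ (v : ℝ × ℝ) (p q : ℝ × ℝ),
      fderiv ℝ (fun y => fderiv ℝ Γ y v) p q = fderiv ℝ (fderiv ℝ Γ) p q v := by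
    intro v p q
    have h := ((ContinuousLinearMap.apply ℝ (Fin N → ℝ) v).hasFDerivAt.comp p
      (hΓ'd p).hasFDerivAt).fderiv
    have heq : (fun y => fderiv ℝ Γ y v)
        = (ContinuousLinearMap.apply ℝ (Fin N → ℝ) v) ∘ (fderiv ℝ Γ) := by
      funext y; simp [ContinuousLinearMap.apply_apply, Function.comp]
    rw [heq, h]
    simp
  have hVW : ∀ p : ℝ × ℝ, fderiv ℝ V p (0, 1) = fderiv ℝ W p (1, 0) := by
    intro p
    rw [hVdef, hWdef, hL (1, 0) p (0, 1), hL (0, 1) p (1, 0), hsymm p]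
  -- the first-variation vector field along γ and the "boundary" function g
  set g : ℝ → ℝ := fun t => α (Γ (t, 0)) (W (t, 0)) with hgdef
  set g' : ℝ → ℝ := fun t =>
    fderiv ℝ α (Γ (t, 0)) (V (t, 0)) (W (t, 0)) + α (Γ (t, 0)) (fderiv ℝ W (t, 0) (1, 0))
    with hg'def
  have hg : ∀ t : ℝ, HasDerivAt g (g' t) t := by
    intro t
    have hc : HasDerivAt (fun u => α (Γ (u, 0))) (fderiv ℝ α (Γ (t, 0)) (V (t, 0))) t := by
      have := (hαd (Γ (t, 0))).hasFDerivAt.comp_hasDerivAt t (hasDerivAt_comp_fst hΓd t 0)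
      simpa [Function.comp_def, keyV] using this
    have hu : HasDerivAt (fun u => W (u, 0)) (fderiv ℝ W (t, 0) (1, 0)) t :=
      hasDerivAt_comp_fst hWd t 0
    exact hc.clm_apply hu
  -- the s-derivative of F at (t, 0)
  have hFs : ∀ t : ℝ, HasDerivAt (fun s => F (t, s))
      (fderiv ℝ α (Γ (t, 0)) (W (t, 0)) (V (t, 0)) + α (Γ (t, 0)) (fderiv ℝ V (t, 0) (0, 1)))
      0 := by
    intro t
    have hc : HasDerivAt (fun s => α (Γ (t, s))) (fderiv ℝ α (Γ (t, 0)) (W (t, 0))) 0 := by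
      have := (hαd (Γ (t, 0))).hasFDerivAt.comp_hasDerivAt 0 (hasDerivAt_comp_snd hΓd t 0)
      simpa [Function.comp_def] using this
    have hu : HasDerivAt (fun s => V (t, s)) (fderiv ℝ V (t, 0) (0, 1)) 0 :=
      hasDerivAt_comp_snd hVd t 0
    exact hc.clm_apply hu
  -- identify the s-derivative of F with fderiv F applied to (0,1)
  have hFs' : ∀ t : ℝ,
      fderiv ℝ F (t, 0) (0, 1)
        = fderiv ℝ α (Γ (t, 0)) (W (t, 0)) (V (t, 0))
            + α (Γ (t, 0)) (fderiv ℝ V (t, 0) (0, 1)) :=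
    fun t => (hasDerivAt_comp_snd hFd t 0).unique (hFs t)
  -- on [a,b] the s-derivative equals g'
  have hmain : ∀ t ∈ Set.uIcc a b, fderiv ℝ F (t, 0) (0, 1) = g' t := by
    intro t ht
    rw [Set.uIcc_of_le hab.le] at ht
    have hch := hchar t ht (W (t, 0))
    rw [keyV t 0] at hch
    unfold extDerivV at hch
    have h1 : fderiv ℝ α (Γ (t, 0)) (W (t, 0)) (V (t, 0))
        = fderiv ℝ α (Γ (t, 0)) (V (t, 0)) (W (t, 0)) := by linarith
    rw [hFs' t, h1, hVW (t, 0), hg'def]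
  -- differentiation under the integral sign
  have hcont01 : Continuous fun t : ℝ => ((t, (0 : ℝ)) : ℝ × ℝ) :=
    continuous_id.prodMk continuous_const
  have hcontF' : Continuous fun t : ℝ => fderiv ℝ F (t, 0) (0, 1) :=
    ((hFsm.continuous_fderiv hone).comp hcont01).clm_apply continuous_const
  -- bound on the derivative on a compact neighborhood
  obtain ⟨C, hC⟩ : ∃ C, ∀ p ∈ (Set.uIcc a b) ×ˢ Metric.closedBall (0 : ℝ) 1,
      ‖fderiv ℝ F p (0, 1)‖ ≤ C := by
    apply (isCompact_uIcc.prod (isCompact_closedBall _ _)).exists_bound_of_continuousOn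
    exact ((hFsm.continuous_fderiv hone).clm_apply continuous_const).continuousOn
  have hder := intervalIntegral.hasDerivAt_integral_of_dominated_loc_of_deriv_le
    (F := fun s t => F (t, s)) (F' := fun s t => fderiv ℝ F (t, s) (0, 1))
    (x₀ := (0 : ℝ)) (bound := fun _ => C) (a := a) (b := b)
    (μ := MeasureTheory.volume) (Metric.ball_mem_nhds 0 one_pos)
    (Filter.Eventually.of_forall fun s =>
      ((hFsm.continuous.comp (continuous_id.prodMk continuous_const)).aestronglyMeasurable))
    ((hFsm.continuous.comp hcont01).intervalIntegrable a b)
    hcontF'.aestronglyMeasurable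
    (Filter.Eventually.of_forall fun t ht s hs => by
      exact hC (t, s) ⟨Set.uIoc_subset_uIcc ht, Metric.ball_subset_closedBall hs⟩)
    (intervalIntegrable_const)
    (Filter.Eventually.of_forall fun t ht s hs => hasDerivAt_comp_snd hFd t s)
  -- compute the value of the derivative: it is ∫ g' = g b - g a = 0
  have hint : (∫ t in a..b, fderiv ℝ F (t, 0) (0, 1)) = 0 := by
    rw [intervalIntegral.integral_congr hmain]
    have hg'cont : Continuous g' := by
      have c1 : Continuous fun t : ℝ => fderiv ℝ α (Γ (t, 0)) :=
        (hα.continuous_fderiv hone).comp (hΓ.continuous.comp hcont01)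
      have cV : Continuous fun t : ℝ => V (t, 0) := hVsm.continuous.comp hcont01
      have cW : Continuous fun t : ℝ => W (t, 0) := hWsm.continuous.comp hcont01
      have cαΓ : Continuous fun t : ℝ => α (Γ (t, 0)) :=
        hα.continuous.comp (hΓ.continuous.comp hcont01)
      have cdW : Continuous fun t : ℝ => fderiv ℝ W (t, 0) (1, 0) :=
        ((hWsm.continuous_fderiv hone).comp hcont01).clm_apply continuous_const
      exact ((c1.clm_apply cV).clm_apply cW).add (cαΓ.clm_apply cdW)
    have hg'int : IntervalIntegrable g' MeasureTheory.volume a b :=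
      hg'cont.intervalIntegrable a b
    rw [intervalIntegral.integral_eq_sub_of_hasDerivAt (fun t _ => hg t) hg'int]
    have hWa : deriv (fun s => Γ (a, s)) 0 = W (a, 0) := (hasDerivAt_comp_snd hΓd a 0).deriv
    have hWb : deriv (fun s => Γ (b, s)) 0 = W (b, 0) := (hasDerivAt_comp_snd hΓd b 0).deriv
    rw [hWa] at hhoriz_a
    rw [hWb] at hhoriz_b
    simp [hgdef, hhoriz_a, hhoriz_b]
  rw [hint] at hder
  exact hder.2
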